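/- arXiv:1908.02471 — 2 statements merged into one kernel-verified Lean document; each statement's English description precedes it below -/
import Mathlib

section
/- The field of real numbers is not a finite-dimensional vector space over any proper subfield: if P is a subfield of ℝ with P ≠ ℝ, then ℝ is infinite-dimensional as a vector space over P. -/
open Module Polynomial IntermediateField

section ArtinSchreier

variable {F K : Type*} [Field F] [Field K] [Algebra F K]
  [IsAlgClosed K] [CharZero K] [FiniteDimensional F K]

/-- Kummer setup: if `K/F` has prime degree `q` with `K` algebraically closed of
characteristic zero, then `K = F(α)` with `α ^ q = a ∈ F` not a `q`-th power in `F`. -/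
lemma kummer_setup (q : ℕ) (hq : q.Prime) (h : finrank F K = q) :
    ∃ a : F, (∀ b : F, b ^ q ≠ a) ∧ ∃ α : K, α ^ q = algebraMap F K a ∧ F⟮α⟯ = ⊤ := by
  haveI : CharZero F := (algebraMap F K).charZero
  haveI : Algebra.IsAlgebraic F K := Algebra.IsAlgebraic.of_finite F K
  haveI : IsAlgClosure F K := ⟨‹_›, ‹_›⟩
  haveI : IsGalois F K := ⟨⟩
  have hq0 : 0 < q := hq.pos
  have h1q : 1 < q := hq.one_lt
  haveI : NeZero q := ⟨hq0.ne'⟩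
  haveI : NeZero (q : K) := ⟨Nat.cast_ne_zero.mpr hq0.ne'⟩
  -- a primitive q-th root of unity in K
  obtain ⟨z, hz⟩ := IsAlgClosed.exists_root (cyclotomic q K) (by
    rw [degree_cyclotomic]
    exact_mod_cast (Nat.totient_pos.2 hq0).ne')
  have hzprim : IsPrimitiveRoot z q := (isRoot_cyclotomic_iff).mp hz
  -- z lies in F
  have hdvd : minpoly F z ∣ cyclotomic q F := minpoly.dvd F z (by
    rw [aeval_def, ← eval_map, map_cyclotomic]
    exact hz)
  have hED : finrank F F⟮z⟯ < q := by
    rw [adjoin.finrank (Algebra.IsIntegral.isIntegral z)]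
    calc (minpoly F z).natDegree ≤ (cyclotomic q F).natDegree :=
          natDegree_le_of_dvd hdvd (cyclotomic_ne_zero q F)
      _ = q.totient := natDegree_cyclotomic q F
      _ < q := Nat.totient_lt q h1q
  have hdd : finrank F F⟮z⟯ ∣ q :=
    ⟨finrank F⟮z⟯ K, by rw [← h, Module.finrank_mul_finrank]⟩
  have hone : finrank F F⟮z⟯ = 1 := by
    rcases (Nat.dvd_prime hq).mp hdd with h1 | h1
    · exact h1
    · omega
  have hzbot : z ∈ Set.range (algebraMap F K) := by
    have := IntermediateField.finrank_eq_one_iff.mp hone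
    have hz' : z ∈ F⟮z⟯ := IntermediateField.mem_adjoin_simple_self F z
    rw [this] at hz'
    exact IntermediateField.mem_bot.mp hz'
  obtain ⟨ζ, hζ⟩ := hzbot
  have hζprim : IsPrimitiveRoot ζ q :=
    IsPrimitiveRoot.of_map_of_injective (hζ ▸ hzprim) (algebraMap F K).injective
  have hK : (primitiveRoots (finrank F K) F).Nonempty := by
    rw [h]
    exact ⟨ζ, (mem_primitiveRoots hq0).mpr hζprim⟩
  haveI := Fact.mk hq
  haveI : IsCyclic (K ≃ₐ[F] K) :=
    isCyclic_of_prime_card (p := q)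
      (by rw [IsGalois.card_aut_eq_finrank, h])
  obtain ⟨α, hαmem, htop⟩ := exists_root_adjoin_eq_top_of_isCyclic F K hK
  obtain ⟨a, ha⟩ := hαmem
  rw [h] at ha
  refine ⟨a, ?_, α, ha.symm, htop⟩
  intro b hb
  -- otherwise α ∈ F, contradicting F⟮α⟯ = ⊤ and finrank = q > 1
  have hαrange : α ∈ Set.range (algebraMap F K) := by
    by_cases hb0 : b = 0
    · refine ⟨0, ?_⟩
      have h0 : α ^ q = 0 := by
        rw [← ha, ← hb, hb0]
        simp [hq0.ne']
      rw [pow_eq_zero_iff (n := q) (by omega)] at h0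
      rw [map_zero, h0]
    · have hbK : algebraMap F K b ≠ 0 := by
        simpa using hb0
      have hpow : (α / algebraMap F K b) ^ q = 1 := by
        rw [div_pow, ← ha, ← map_pow, hb, div_self]
        intro h0
        have ha0 : a = 0 := (_root_.map_eq_zero _).mp h0
        rw [ha0] at hb
        rw [pow_eq_zero_iff (n := q) (by omega)] at hb
        exact hb0 hb
      obtain ⟨k, -, hk⟩ := hzprim.eq_pow_of_pow_eq_one hpow
      refine ⟨ζ ^ k * b, ?_⟩
      rw [map_mul, map_pow, hζ, hk]
      field_simp
  have hbot : F⟮α⟯ = ⊥ :=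
    IntermediateField.adjoin_simple_eq_bot_iff.mpr (IntermediateField.mem_bot.mpr hαrange)
  rw [hbot] at htop
  have : finrank F ((⊥ : IntermediateField F K)) = 1 := IntermediateField.finrank_bot
  rw [htop, IntermediateField.finrank_top', h] at this
  omega

/-- No algebraically closed field of characteristic zero has a subfield of
odd prime index. -/
lemma no_odd_prime_deg (q : ℕ) (hq : q.Prime) (hq2 : q ≠ 2)
    (h : finrank F K = q) : False := by
  obtain ⟨a, ha, α, hα, htop⟩ := kummer_setup q hq h
  have hirr : Irreducible (X ^ q ^ 2 - C a) :=
    X_pow_sub_C_irreducible_of_prime_pow hq hq2 2 ha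
  obtain ⟨β, hβ⟩ := IsAlgClosed.exists_pow_nat_eq (algebraMap F K a) (n := q ^ 2)
    (by have := hq.pos; positivity)
  have hmin : X ^ q ^ 2 - C a = minpoly F β :=
    minpoly.eq_of_irreducible_of_monic hirr (by simp [hβ])
      (monic_X_pow_sub_C a (by have := hq.pos; positivity))
  have h2 : finrank F F⟮β⟯ = q ^ 2 := by
    rw [adjoin.finrank (Algebra.IsIntegral.isIntegral β), ← hmin, natDegree_X_pow_sub_C]
  have hdvd : q ^ 2 ∣ q := by
    refine ⟨finrank F⟮β⟯ K, ?_⟩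
    rw [← h2, ← h, Module.finrank_mul_finrank]
  have := Nat.le_of_dvd hq.pos hdvd
  nlinarith [hq.two_le]

/-- No algebraically closed field of characteristic zero has a subfield of index 2
containing a square root of -1. -/
lemma no_deg_two_with_i (h : finrank F K = 2) (j : F) (hj : j ^ 2 = -1) : False := by
  haveI : CharZero F := (algebraMap F K).charZero
  haveI : Algebra.IsAlgebraic F K := Algebra.IsAlgebraic.of_finite F K
  haveI : IsAlgClosure F K := ⟨‹_›, ‹_›⟩
  haveI : IsGalois F K := ⟨⟩
  obtain ⟨a, ha, α, hα, htop⟩ := kummer_setup 2 Nat.prime_two h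
  have hainj : Function.Injective (algebraMap F K) := (algebraMap F K).injective
  have hαnr : α ∉ Set.range (algebraMap F K) := by
    rintro ⟨b, rfl⟩
    exact ha b (hainj (by rw [map_pow, hα]))
  have hcard : Fintype.card (K ≃ₐ[F] K) = 2 := by
    rw [← Nat.card_eq_fintype_card, IsGalois.card_aut_eq_finrank, h]
  -- elements fixed by all automorphisms lie in F
  have hfix : ∀ x : K, (∀ σ : K ≃ₐ[F] K, σ x = x) → x ∈ Set.range (algebraMap F K) := by
    intro x hx
    have hbot : IntermediateField.fixedField (⊤ : Subgroup (K ≃ₐ[F] K)) = ⊥ :=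
      OrderIso.map_bot (IsGalois.intermediateFieldEquivSubgroup (F := F) (E := K)).symm
    rw [← IntermediateField.mem_bot, ← hbot]
    rintro ⟨σ, -⟩
    exact hx σ
  -- find σ with σ α = -α
  have hnall : ¬ ∀ σ : K ≃ₐ[F] K, σ α = α := fun hall => hαnr (hfix α hall)
  push_neg at hnall
  obtain ⟨σ, hσα⟩ := hnall
  have hσα' : σ α = -α := by
    have h1 : (σ α - α) * (σ α + α) = 0 := by
      have hsq : (σ α) ^ 2 = α ^ 2 := by
        rw [← map_pow, hα, AlgEquiv.commutes]
      linear_combination hsq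
    rcases mul_eq_zero.mp h1 with h1 | h1
    · exact absurd (sub_eq_zero.mp h1) hσα
    · exact eq_neg_of_add_eq_zero_left h1
  have hσ1 : σ ≠ 1 := by
    rintro rfl
    exact hσα rfl
  have hord : orderOf σ = 2 := by
    have hd : orderOf σ ∣ 2 := hcard ▸ orderOf_dvd_card
    rcases (Nat.dvd_prime Nat.prime_two).mp hd with h1 | h1
    · exact absurd (orderOf_eq_one_iff.mp h1) hσ1
    · exact h1
  have htopG : Subgroup.zpowers σ = ⊤ := by
    rw [← Subgroup.card_eq_iff_eq_top, Nat.card_zpowers, hord, Nat.card_eq_fintype_card, hcard]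
  obtain ⟨β, hβ⟩ := IsAlgClosed.exists_pow_nat_eq α (n := 2) two_pos
  set c := β * σ β with hc
  have hσσ : ∀ x : K, σ (σ x) = x := by
    intro x
    have : σ * σ = 1 := by
      have := pow_orderOf_eq_one σ
      rwa [hord, pow_two] at this
    calc σ (σ x) = (σ * σ) x := rfl
      _ = x := by rw [this]; rfl
  have hσc : σ c = c := by
    rw [hc, map_mul, hσσ β, mul_comm]
  have hcc : ∀ τ : K ≃ₐ[F] K, τ c = c := by
    intro τ
    have hstab : Subgroup.zpowers σ ≤ MulAction.stabilizer (K ≃ₐ[F] K) c :=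
      Subgroup.zpowers_le.mpr (by
        rw [MulAction.mem_stabilizer_iff]
        exact hσc)
    have := hstab (htopG ▸ Subgroup.mem_top τ)
    rw [MulAction.mem_stabilizer_iff] at this
    exact this
  obtain ⟨d, hd⟩ := hfix c hcc
  have hc2 : c ^ 2 = -(algebraMap F K a) := by
    rw [hc, mul_pow, ← map_pow, hβ, hσα']
    linear_combination (-1 : K) * hα
  refine ha (j * d) ?_
  apply hainj
  have hjK : (algebraMap F K j) ^ 2 = -1 := by
    rw [← map_pow, hj, map_neg, map_one]
  rw [map_pow, map_mul, hd, mul_pow, hc2, hjK]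
  ring

/-- Every subfield `M` with `finrank M K` a prime `q` exists if `q` divides
`finrank F K` (as the fixed field of a cyclic subgroup of order `q`). -/
lemma exists_deg_prime_field (q : ℕ) (hq : q.Prime) (hdvd : q ∣ finrank F K) :
    ∃ M : IntermediateField F K, finrank M K = q := by
  haveI : CharZero F := (algebraMap F K).charZero
  haveI : Algebra.IsAlgebraic F K := Algebra.IsAlgebraic.of_finite F K
  haveI : IsAlgClosure F K := ⟨‹_›, ‹_›⟩
  haveI : IsGalois F K := ⟨⟩
  haveI := Fact.mk hq
  have hcard : Fintype.card (K ≃ₐ[F] K) = finrank F K := by rw [← Nat.card_eq_fintype_card]; exact IsGalois.card_aut_eq_finrank F K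
  obtain ⟨σ, hσ⟩ := exists_prime_orderOf_dvd_card q (hcard ▸ hdvd)
  refine ⟨IntermediateField.fixedField (Subgroup.zpowers σ), ?_⟩
  classical
  rw [IntermediateField.finrank_fixedField_eq_card, Nat.card_zpowers, hσ]

/-- Artin–Schreier style bound: an algebraically closed field of characteristic zero
has no subfields of finite index greater than 2. -/
lemma finrank_le_two_of_isAlgClosed : finrank F K ≤ 2 := by
  by_contra hlt
  push_neg at hlt
  -- no odd prime divides finrank F K
  have hodd : ∀ p : ℕ, p.Prime → p ∣ finrank F K → p = 2 := by
    intro p hp hdvd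
    by_contra hp2
    obtain ⟨M, hM⟩ := exists_deg_prime_field p hp hdvd
    haveI : FiniteDimensional M K := FiniteDimensional.right F M K
    haveI : CharZero M := (algebraMap M K).charZero
    exact no_odd_prime_deg (F := M) p hp hp2 hM
  -- hence 4 divides finrank F K
  have hN1 : finrank F K ≠ 1 := by omega
  have h2 : (2 : ℕ) ∣ finrank F K := by
    have := hodd (finrank F K).minFac (Nat.minFac_prime hN1) (Nat.minFac_dvd _)
    exact this ▸ Nat.minFac_dvd _
  obtain ⟨m, hm⟩ := h2
  have hm1 : m ≠ 1 := by omega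
  have hm0 : m ≠ 0 := by
    intro h0
    rw [h0] at hm
    omega
  have h4 : (4 : ℕ) ∣ finrank F K := by
    have hp := Nat.minFac_prime hm1
    have : m.minFac = 2 := hodd m.minFac hp (hm ▸ (Nat.minFac_dvd m).mul_left 2)
    obtain ⟨k, hk⟩ := Nat.minFac_dvd m
    rw [hm, hk, this]
    exact ⟨k, by ring⟩
  -- get i with i^2 = -1
  obtain ⟨i, hi⟩ := IsAlgClosed.exists_pow_nat_eq (-1 : K) (n := 2) two_pos
  set E := F⟮i⟯ with hE
  haveI : FiniteDimensional E K := FiniteDimensional.right F E K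
  haveI : CharZero E := (algebraMap E K).charZero
  have hfE : finrank F E ≤ 2 := by
    rw [hE, adjoin.finrank (Algebra.IsIntegral.isIntegral i)]
    have hdvd : minpoly F i ∣ (X ^ 2 + C 1 : F[X]) := minpoly.dvd F i (by
      simp [hi])
    have h20 : (X ^ 2 + C 1 : F[X]) ≠ 0 :=
      (monic_X_pow_add_C (1 : F) (by norm_num)).ne_zero
    calc (minpoly F i).natDegree ≤ (X ^ 2 + C 1 : F[X]).natDegree :=
          natDegree_le_of_dvd hdvd h20
      _ = 2 := by compute_degree!
  have hmulEK : finrank F E * finrank E K = finrank F K := Module.finrank_mul_finrank F E K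
  have hpos : 0 < finrank F E := finrank_pos
  have h2EK : (2 : ℕ) ∣ finrank E K := by
    interval_cases hFE : finrank F E
    · obtain ⟨k, hk⟩ := h4
      exact ⟨2 * k, by omega⟩
    · obtain ⟨k, hk⟩ := h4
      exact ⟨k, by omega⟩
  obtain ⟨M, hM⟩ := exists_deg_prime_field (F := E) 2 Nat.prime_two h2EK
  haveI : FiniteDimensional M K := FiniteDimensional.right E M K
  haveI : CharZero M := (algebraMap M K).charZero
  have hiE : i ∈ E := IntermediateField.mem_adjoin_simple_self F i
  have hiM : i ∈ M := by
    have : (algebraMap E K) ⟨i, hiE⟩ ∈ M := M.algebraMap_mem ⟨i, hiE⟩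
    exact this
  refine no_deg_two_with_i (F := M) hM ⟨i, hiM⟩ ?_
  have : ((⟨i, hiM⟩ : M) ^ 2 : K) = ((-1 : M) : K) := by
    push_cast
    rw [hi]
  exact_mod_cast this

end ArtinSchreier

/-- The field of real numbers is not a finite-dimensional vector space over any
proper subfield: there is no finite spanning set of `ℝ` over `P`. -/
theorem real_infinite_dimensional_over_proper_subfield
    (P : Subfield ℝ) (hP : P ≠ ⊤) :
    ¬ ∃ s : Finset ℝ, Submodule.span P (s : Set ℝ) = ⊤ := by
  rintro ⟨s, hs⟩
  haveI : FiniteDimensional P ℝ := ⟨⟨s, hs⟩⟩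
  haveI : IsScalarTower P ℝ ℂ := IsScalarTower.of_algebraMap_eq fun x => rfl
  haveI : FiniteDimensional P ℂ := FiniteDimensional.trans P ℝ ℂ
  have h2 : Module.finrank P ℝ * 2 = Module.finrank P ℂ := by
    rw [← Complex.finrank_real_complex, Module.finrank_mul_finrank]
  have hle : Module.finrank P ℂ ≤ 2 := finrank_le_two_of_isAlgClosed (F := P) (K := ℂ)
  have hpos : 0 < Module.finrank P ℝ := Module.finrank_pos
  have h1 : Module.finrank P ℝ = 1 := by omega
  apply hP
  rw [eq_top_iff]
  intro x _
  have hspan : (Submodule.span P {(1 : ℝ)}) = ⊤ := by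
    apply Submodule.eq_top_of_finrank_eq
    rw [finrank_span_singleton (one_ne_zero), h1]
  have hx : x ∈ Submodule.span P {(1 : ℝ)} := hspan ▸ Submodule.mem_top
  obtain ⟨c, hc⟩ := Submodule.mem_span_singleton.mp hx
  have : (c : ℝ) = x := by
    rw [← hc]
    simp [Subfield.smul_def]
  exact this ▸ c.2
end

section
/- Let P be a proper subfield of ℝ and let X₁, X₂ be P-linear subspaces with ℝ = X₁ ⊕ X₂, both nonzero and proper. Then the projection p₁ : ℝ → X₁ corresponding to this decomposition, viewed as an additive map ℝ → ℝ, is not order bounded, i.e., p₁ does not map some bounded interval of ℝ into a bounded set. -/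
/-- If `ℝ = X₁ ⊕ X₂` as `P`-vector spaces with both summands nonzero and proper,
then the projection onto `X₁` along `X₂` is not order bounded: it fails to map
some bounded interval of `ℝ` into a bounded set. -/
theorem projection_not_order_bounded
    (P : Subfield ℝ) (hP : P ≠ ⊤)
    (X₁ X₂ : Submodule P ℝ) (hcompl : IsCompl X₁ X₂)
    (h₁ : X₁ ≠ ⊥) (h₁' : X₁ ≠ ⊤) (h₂ : X₂ ≠ ⊥) (h₂' : X₂ ≠ ⊤)
    (p₁ : ℝ →ₗ[P] ℝ)
    (hp₁ : ∀ x ∈ X₁, p₁ x = x) (hp₂ : ∀ x ∈ X₂, p₁ x = 0) :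
    ¬ ∀ a b : ℝ, ∃ M : ℝ, ∀ x ∈ Set.Icc a b, |p₁ x| ≤ M := by
  intro H
  obtain ⟨M, hM⟩ := H (-1) 1
  set c : ℝ := p₁ 1 with hc
  -- the auxiliary additive map g x = p₁ x - c * x
  set g : ℝ →+ ℝ := p₁.toAddMonoidHom - AddMonoidHom.mulLeft c with hg
  have hgdef : ∀ x : ℝ, g x = p₁ x - c * x := fun x => rfl
  have hg1 : g 1 = 0 := by simp [hgdef, hc]
  have hgint : ∀ n : ℤ, g (n : ℝ) = 0 := by
    intro n
    have : ((n : ℝ)) = n • (1 : ℝ) := by simp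
    rw [this, map_zsmul, hg1, smul_zero]
  -- g is globally bounded by M + |c|
  have hbound : ∀ x : ℝ, |g x| ≤ M + |c| := by
    intro x
    set n : ℤ := round x
    set y : ℝ := x - n with hy
    have hy1 : |y| ≤ 1 := le_trans (abs_sub_round x) (by norm_num)
    have hgx : g x = g y := by
      have : x = y + n := by ring
      rw [this, map_add, hgint, add_zero]
    have hyI : y ∈ Set.Icc (-1 : ℝ) 1 := abs_le.mp hy1
    have h1 : |p₁ y| ≤ M := hM y hyI
    have h2 : |c * y| ≤ |c| := by
      rw [abs_mul]
      calc |c| * |y| ≤ |c| * 1 := by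
            exact mul_le_mul_of_nonneg_left hy1 (abs_nonneg c)
        _ = |c| := mul_one _
    calc |g x| = |p₁ y - c * y| := by rw [hgx, hgdef]
      _ ≤ |p₁ y| + |c * y| := abs_sub _ _
      _ ≤ M + |c| := add_le_add h1 h2
  -- hence g = 0, i.e. p₁ x = c * x
  have hlin : ∀ x : ℝ, p₁ x = c * x := by
    intro x
    by_contra h
    have hgx : g x ≠ 0 := fun h0 => h (by have := hgdef x; rw [h0] at this; linarith)
    obtain ⟨n, hn⟩ := exists_nat_gt ((M + |c|) / |g x|)
    have hpos : 0 < |g x| := abs_pos.mpr hgx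
    have hgt : M + |c| < n * |g x| := by
      rwa [div_lt_iff₀ hpos] at hn
    have : |g (n • x)| ≤ M + |c| := hbound _
    rw [map_nsmul, nsmul_eq_mul, abs_mul, Nat.abs_cast] at this
    linarith
  -- now derive c = 1 and c = 0
  obtain ⟨x₁, hx₁m, hx₁⟩ := Submodule.exists_mem_ne_zero_of_ne_bot h₁
  obtain ⟨x₂, hx₂m, hx₂⟩ := Submodule.exists_mem_ne_zero_of_ne_bot h₂
  have e1 : c = 1 := by
    have := hlin x₁
    rw [hp₁ x₁ hx₁m] at this
    have h' : c * x₁ = 1 * x₁ := by rw [one_mul]; exact this.symm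
    exact mul_right_cancel₀ hx₁ h'
  have e2 : c = 0 := by
    have := hlin x₂
    rw [hp₂ x₂ hx₂m] at this
    rcases mul_eq_zero.mp this.symm with h | h
    · exact h
    · exact absurd h hx₂
  rw [e1] at e2
  exact one_ne_zero e2
end
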